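/- Let Σ ⊆ ℝ^N be an open convex cone with vertex at 0, let B = {x : H₀(x) < 1} be the unit Wulff ball of H centered at 0, and set K := Σ ∩ B. Define the anisotropic perimeter associated with the convex body K by P_K(E) := sup{ ∫_E div σ(x) dx : σ ∈ C¹_c(ℝ^N;ℝ^N), σ(x) ∈ closure(K) for all x }. Then for every Lebesgue-measurable set E ⊆ Σ with P(E;ℝ^N) < ∞ (finite Euclidean perimeter), one has P_K(E) ≤ P_H(E;Σ). -/

import Mathlib

open MeasureTheory Set Metric
open scoped ENNReal NNReal RealInnerProductSpace Topology Classical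

noncomputable section

/-- Divergence of a vector field on `ℝ^N`, computed coordinatewise. -/
def vdiv {N : ℕ} (σ : EuclideanSpace ℝ (Fin N) → EuclideanSpace ℝ (Fin N))
    (x : EuclideanSpace ℝ (Fin N)) : ℝ :=
  ∑ i, fderiv ℝ σ x (EuclideanSpace.single i 1) i

/-- The dual norm `H₀(x) = sup_{ξ ≠ 0} ⟨x, ξ⟩ / H(ξ)`. -/
def dualNorm {N : ℕ} (H : EuclideanSpace ℝ (Fin N) → ℝ) (x : EuclideanSpace ℝ (Fin N)) : ℝ :=
  sSup ((fun ξ => ⟪x, ξ⟫ / H ξ) '' {ξ : EuclideanSpace ℝ (Fin N) | ξ ≠ 0})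

/-- `H` is a norm on `ℝ^N`: convex, positive away from `0`, absolutely homogeneous. -/
structure IsAnisoNorm {N : ℕ} (H : EuclideanSpace ℝ (Fin N) → ℝ) : Prop where
  conv : ConvexOn ℝ Set.univ H
  pos : ∀ ξ, ξ ≠ 0 → 0 < H ξ
  hom : ∀ (t : ℝ) (ξ : EuclideanSpace ℝ (Fin N)), H (t • ξ) = |t| * H ξ

/-- `H` is `C²` away from the origin and uniformly elliptic: the Hessian of
`ξ ↦ ½ H(ξ)²` is positive definite at every `ξ ≠ 0`. -/
def UniformlyElliptic {N : ℕ} (H : EuclideanSpace ℝ (Fin N) → ℝ) : Prop :=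
  ContDiffOn ℝ 2 H {(0 : EuclideanSpace ℝ (Fin N))}ᶜ ∧
  ∀ ξ : EuclideanSpace ℝ (Fin N), ξ ≠ 0 → ∀ v : EuclideanSpace ℝ (Fin N), v ≠ 0 →
    0 < ⟪fderiv ℝ (gradient (fun z => H z ^ 2 / 2)) ξ v, v⟫

/-- The anisotropic vector field `H(∇u)^{p-1} ∇H(∇u)`, understood to be `0`
at points where `∇u = 0`. -/
def aField {N : ℕ} (H : EuclideanSpace ℝ (Fin N) → ℝ) (p : ℝ)
    (u : EuclideanSpace ℝ (Fin N) → ℝ) (x : EuclideanSpace ℝ (Fin N)) :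
    EuclideanSpace ℝ (Fin N) :=
  if gradient u x = 0 then 0 else H (gradient u x) ^ (p - 1) • gradient H (gradient u x)

/-- Weighted anisotropic perimeter of `E` relative to `S`:
`sup { ∫_E div σ : σ ∈ C¹_c(S; ℝ^N), ρ(σ(x)) ≤ w(x) for all x }`, valued in `[0,∞]`. -/
def periW {N : ℕ} (ρ w : EuclideanSpace ℝ (Fin N) → ℝ)
    (E S : Set (EuclideanSpace ℝ (Fin N))) : ℝ≥0∞ :=
  ⨆ σ ∈ {σ : EuclideanSpace ℝ (Fin N) → EuclideanSpace ℝ (Fin N) |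
      ContDiff ℝ 1 σ ∧ HasCompactSupport σ ∧ tsupport σ ⊆ S ∧ ∀ x, ρ (σ x) ≤ w x},
    ENNReal.ofReal (∫ x in E, vdiv σ x)

/-- Open convex cone with vertex at the origin (the case `S = ℝ^N` is allowed). -/
def IsOpenConvexCone {N : ℕ} (S : Set (EuclideanSpace ℝ (Fin N))) : Prop :=
  IsOpen S ∧ Convex ℝ S ∧ ∀ x ∈ S, ∀ t : ℝ, 0 < t → t • x ∈ S

/-- The lineality space of `S`: directions along which `S` is translation invariant.
For a convex cone `Σ = ℝ^k × Σ̃` with `Σ̃` containing no lines this is `ℝ^k × {0}`. -/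
def lineality {N : ℕ} (S : Set (EuclideanSpace ℝ (Fin N))) :
    Set (EuclideanSpace ℝ (Fin N)) :=
  {v | ∀ x ∈ S, ∀ t : ℝ, x + t • v ∈ S}

/-- The anisotropic perimeter associated with a convex body `K`:
`P_K(E) = sup { ∫_E div σ : σ ∈ C¹_c(ℝ^N; ℝ^N), σ(x) ∈ closure K }`. -/
def periK {N : ℕ} (K : Set (EuclideanSpace ℝ (Fin N)))
    (E : Set (EuclideanSpace ℝ (Fin N))) : ℝ≥0∞ :=
  ⨆ σ ∈ {σ : EuclideanSpace ℝ (Fin N) → EuclideanSpace ℝ (Fin N) |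
      ContDiff ℝ 1 σ ∧ HasCompactSupport σ ∧ ∀ x, σ x ∈ closure K},
    ENNReal.ofReal (∫ x in E, vdiv σ x)

/-! ### Auxiliary lemmas -/

open scoped Convolution

section AuxMono

lemma expNegInvGlue_monotone' : Monotone expNegInvGlue := by
  intro x y hxy
  rcases le_or_gt y 0 with hy | hy
  · rw [expNegInvGlue.zero_of_nonpos (hxy.trans hy), expNegInvGlue.zero_of_nonpos hy]
  rcases le_or_gt x 0 with hx | hx
  · rw [expNegInvGlue.zero_of_nonpos hx]
    exact (expNegInvGlue.pos_of_pos hy).le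
  · have hx' : expNegInvGlue x = Real.exp (-x⁻¹) := by
      simp [expNegInvGlue, not_le.2 hx]
    have hy' : expNegInvGlue y = Real.exp (-y⁻¹) := by
      simp [expNegInvGlue, not_le.2 hy]
    rw [hx', hy']
    apply Real.exp_le_exp.2
    have := one_div_le_one_div_of_le hx hxy
    simp only [one_div] at this
    linarith

lemma smoothTransition_monotone' : Monotone Real.smoothTransition := by
  intro x y hxy
  unfold Real.smoothTransition
  rw [div_le_div_iff₀ (Real.smoothTransition.pos_denom x) (Real.smoothTransition.pos_denom y)]
  have h1 : expNegInvGlue x ≤ expNegInvGlue y := expNegInvGlue_monotone' hxy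
  have h2 : expNegInvGlue (1 - y) ≤ expNegInvGlue (1 - x) :=
    expNegInvGlue_monotone' (by linarith)
  nlinarith [expNegInvGlue.nonneg x, expNegInvGlue.nonneg (1 - y)]

end AuxMono

section AuxCone

variable {N : ℕ}

lemma cone_add_mem {S : Set (EuclideanSpace ℝ (Fin N))} (hS : IsOpenConvexCone S)
    {a b : EuclideanSpace ℝ (Fin N)} (ha : a ∈ S) (hb : b ∈ S) : a + b ∈ S := by
  obtain ⟨-, hconv, hcone⟩ := hS
  have hmid : ((1:ℝ)/2) • a + ((1:ℝ)/2) • b ∈ S :=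
    hconv ha hb (by norm_num) (by norm_num) (by norm_num)
  have h := hcone _ hmid 2 (by norm_num)
  have h2 : (2:ℝ) • (((1:ℝ)/2) • a + ((1:ℝ)/2) • b) = a + b := by
    rw [smul_add, smul_smul, smul_smul]; norm_num
  rwa [h2] at h

lemma cone_closure_add_mem {S : Set (EuclideanSpace ℝ (Fin N))} (hS : IsOpenConvexCone S)
    {y b : EuclideanSpace ℝ (Fin N)} (hy : y ∈ closure S) (hb : b ∈ S) : y + b ∈ S := by
  obtain ⟨ε, hε, hball⟩ := Metric.isOpen_iff.1 hS.1 b hb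
  obtain ⟨y', hy'S, hy'd⟩ := Metric.mem_closure_iff.1 hy ε hε
  have hbmem : b + (y - y') ∈ S := by
    apply hball
    rw [Metric.mem_ball, dist_eq_norm]
    simpa [dist_eq_norm, norm_sub_rev] using hy'd
  have h := cone_add_mem hS hy'S hbmem
  have heq : y' + (b + (y - y')) = y + b := by abel
  rwa [heq] at h

lemma cone_smul_closure_mem {S : Set (EuclideanSpace ℝ (Fin N))}
    {y : EuclideanSpace ℝ (Fin N)} (hS : IsOpenConvexCone S) (hy : y ∈ closure S)
    {t : ℝ} (ht : 0 < t) : t • y ∈ closure S := by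
  have hmaps : Set.MapsTo (fun z : EuclideanSpace ℝ (Fin N) => t • z) S S :=
    fun z hz => hS.2.2 z hz t ht
  exact hmaps.closure (continuous_const_smul t) hy

lemma infDist_mono_cone {S : Set (EuclideanSpace ℝ (Fin N))} (hS : IsOpenConvexCone S)
    (hne : Sᶜ.Nonempty) {y : EuclideanSpace ℝ (Fin N)} (hy : y ∈ closure S)
    (x : EuclideanSpace ℝ (Fin N)) : infDist x Sᶜ ≤ infDist (x + y) Sᶜ := by
  have hiso : Isometry (fun z : EuclideanSpace ℝ (Fin N) => z - y) :=
    Isometry.of_dist_eq fun a b => by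
      simp only [dist_eq_norm]
      congr 1
      abel
  have himg : (fun z : EuclideanSpace ℝ (Fin N) => z - y) '' Sᶜ ⊆ Sᶜ := by
    rintro _ ⟨z, hz, rfl⟩
    intro hmem
    exact hz (by simpa using cone_closure_add_mem hS hy hmem)
  have heq : infDist (x + y) Sᶜ
      = infDist x ((fun z : EuclideanSpace ℝ (Fin N) => z - y) '' Sᶜ) := by
    have h := infDist_image (x := x + y) (t := Sᶜ) hiso
    simpa using h.symm
  rw [heq]
  exact infDist_le_infDist_of_subset himg (hne.image _)

lemma fderiv_nonneg_of_monotone {F : EuclideanSpace ℝ (Fin N) → ℝ}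
    {x y : EuclideanSpace ℝ (Fin N)} (hF : DifferentiableAt ℝ F x)
    (hmono : ∀ t : ℝ, 0 < t → F x ≤ F (x + t • y)) : 0 ≤ fderiv ℝ F x y := by
  have hline : HasDerivAt (fun t : ℝ => F (x + t • y)) (fderiv ℝ F x y) 0 := by
    have h1 : HasDerivAt (fun t : ℝ => x + t • y) y 0 := by
      simpa using ((hasDerivAt_id (0:ℝ)).smul_const y).const_add x
    have h2 : HasFDerivAt F (fderiv ℝ F x) (x + (0:ℝ) • y) := by
      simpa using hF.hasFDerivAt
    exact h2.comp_hasDerivAt (0:ℝ) h1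
  have hslope : Filter.Tendsto (slope (fun t : ℝ => F (x + t • y)) 0) (𝓝[>] 0)
      (𝓝 (fderiv ℝ F x y)) := by
    have h := hasDerivAt_iff_tendsto_slope.1 hline
    exact h.mono_left (nhdsWithin_mono 0 (fun t ht => ne_of_gt ht))
  refine ge_of_tendsto hslope ?_
  filter_upwards [self_mem_nhdsWithin] with t ht
  have h0 : F x ≤ F (x + t • y) := hmono t ht
  have hs : slope (fun t : ℝ => F (x + t • y)) 0 t
      = (F (x + t • y) - F x) / t := by
    rw [slope_def_field]
    simp
  rw [hs]
  have hsub : 0 ≤ F (x + t • y) - F x := sub_nonneg.2 h0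
  exact div_nonneg hsub (le_of_lt ht)

end AuxCone

section AuxDual

variable {N : ℕ} {H : EuclideanSpace ℝ (Fin N) → ℝ}

lemma aniso_ratio_bound (hH : IsAnisoNorm H) :
    ∃ C : ℝ, 0 < C ∧ ∀ (y ξ : EuclideanSpace ℝ (Fin N)), ξ ≠ 0 → ⟪y, ξ⟫ / H ξ ≤ C * ‖y‖ := by
  by_cases htriv : ∀ ξ : EuclideanSpace ℝ (Fin N), ξ = 0
  · exact ⟨1, one_pos, fun y ξ hξ => absurd (htriv ξ) hξ⟩
  push_neg at htriv
  obtain ⟨ξ₀, hξ₀⟩ := htriv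
  have hcontH : Continuous H := by
    rw [← continuousOn_univ]
    exact hH.conv.continuousOn isOpen_univ
  have hsph : (Metric.sphere (0 : EuclideanSpace ℝ (Fin N)) 1).Nonempty :=
    ⟨‖ξ₀‖⁻¹ • ξ₀, by simp [norm_smul, inv_mul_cancel₀ (norm_ne_zero_iff.2 hξ₀)]⟩
  obtain ⟨ξm, hξm, hmin⟩ :=
    (isCompact_sphere (0 : EuclideanSpace ℝ (Fin N)) 1).exists_isMinOn hsph
      hcontH.continuousOn
  have hξmne : ξm ≠ 0 := by
    intro h
    rw [h] at hξm
    simp at hξm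
  set m := H ξm with hm
  have hmpos : 0 < m := hH.pos _ hξmne
  refine ⟨m⁻¹, inv_pos.2 hmpos, fun y ξ hξ => ?_⟩
  have hHξ : 0 < H ξ := hH.pos _ hξ
  have hlow : m * ‖ξ‖ ≤ H ξ := by
    have hunit : ‖ξ‖⁻¹ • ξ ∈ Metric.sphere (0 : EuclideanSpace ℝ (Fin N)) 1 := by
      simp [norm_smul, inv_mul_cancel₀ (norm_ne_zero_iff.2 hξ)]
    have h1 : m ≤ H (‖ξ‖⁻¹ • ξ) := hmin hunit
    have h2 : H (‖ξ‖⁻¹ • ξ) = ‖ξ‖⁻¹ * H ξ := by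
      rw [hH.hom]
      congr 1
      exact abs_of_nonneg (inv_nonneg.2 (norm_nonneg _))
    rw [h2] at h1
    have hξpos : 0 < ‖ξ‖ := norm_pos_iff.2 hξ
    calc m * ‖ξ‖ ≤ (‖ξ‖⁻¹ * H ξ) * ‖ξ‖ := by
          apply mul_le_mul_of_nonneg_right h1 hξpos.le
      _ = H ξ := by field_simp
  rw [div_le_iff₀ hHξ]
  calc ⟪y, ξ⟫ ≤ ‖y‖ * ‖ξ‖ := real_inner_le_norm y ξ
    _ ≤ m⁻¹ * ‖y‖ * H ξ := by
        have heq : ‖y‖ * ‖ξ‖ = m⁻¹ * ‖y‖ * (m * ‖ξ‖) := by field_simp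
        rw [heq]
        apply mul_le_mul_of_nonneg_left hlow
        positivity

lemma ratio_le_dualNorm (hH : IsAnisoNorm H) {y ξ : EuclideanSpace ℝ (Fin N)} (hξ : ξ ≠ 0) :
    ⟪y, ξ⟫ / H ξ ≤ dualNorm H y := by
  obtain ⟨C, hC, hbound⟩ := aniso_ratio_bound hH
  apply le_csSup
  · exact ⟨C * ‖y‖, by rintro _ ⟨ζ, hζ, rfl⟩; exact hbound y ζ hζ⟩
  · exact ⟨ξ, hξ, rfl⟩

lemma dualNorm_le_one_of_mem_closure (hH : IsAnisoNorm H) {y : EuclideanSpace ℝ (Fin N)}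
    (hy : y ∈ closure {z : EuclideanSpace ℝ (Fin N) | dualNorm H z < 1}) :
    dualNorm H y ≤ 1 := by
  apply Real.sSup_le _ zero_le_one
  rintro _ ⟨ξ, hξ, rfl⟩
  have hsub : {z : EuclideanSpace ℝ (Fin N) | dualNorm H z < 1}
      ⊆ {z : EuclideanSpace ℝ (Fin N) | ⟪z, ξ⟫ / H ξ ≤ 1} := fun z hz =>
    le_of_lt (lt_of_le_of_lt (ratio_le_dualNorm hH hξ) hz)
  have hclosed : IsClosed {z : EuclideanSpace ℝ (Fin N) | ⟪z, ξ⟫ / H ξ ≤ 1} := by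
    apply isClosed_le _ continuous_const
    exact (continuous_inner.comp (Continuous.prodMk continuous_id continuous_const)).div_const _
  exact (closure_minimal hsub hclosed) hy

lemma dualNorm_smul_le_one (hH : IsAnisoNorm H) {y : EuclideanSpace ℝ (Fin N)}
    (hy : dualNorm H y ≤ 1) {c : ℝ} (hc0 : 0 ≤ c) (hc1 : c ≤ 1) :
    dualNorm H (c • y) ≤ 1 := by
  apply Real.sSup_le _ zero_le_one
  rintro _ ⟨ξ, hξ, rfl⟩
  have hr : ⟪y, ξ⟫ / H ξ ≤ 1 := le_trans (ratio_le_dualNorm hH hξ) hy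
  have heq : ⟪c • y, ξ⟫ / H ξ = c * (⟪y, ξ⟫ / H ξ) := by
    rw [real_inner_smul_left]; ring
  show ⟪c • y, ξ⟫ / H ξ ≤ 1
  rw [heq]
  rcases le_or_gt (⟪y, ξ⟫ / H ξ) 0 with h | h
  · exact le_trans (mul_nonpos_of_nonneg_of_nonpos hc0 h) zero_le_one
  · calc c * (⟪y, ξ⟫ / H ξ) ≤ 1 * 1 := mul_le_mul hc1 hr h.le zero_le_one
      _ = 1 := one_mul 1

end AuxDual

section AuxDiv

variable {N : ℕ}

lemma fderiv_apply_eq_sum (L : EuclideanSpace ℝ (Fin N) →L[ℝ] ℝ)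
    (v : EuclideanSpace ℝ (Fin N)) :
    L v = ∑ i, v i * L (EuclideanSpace.single i 1) := by
  have hv : v = ∑ i, v i • EuclideanSpace.single i 1 := by
    have h := (EuclideanSpace.basisFun (Fin N) ℝ).sum_repr v
    simp only [EuclideanSpace.basisFun_repr, EuclideanSpace.basisFun_apply] at h
    exact h.symm
  conv_lhs => rw [hv]
  rw [map_sum]
  congr 1
  ext i
  rw [L.map_smul]
  simp [smul_eq_mul]

lemma vdiv_smul {η : EuclideanSpace ℝ (Fin N) → ℝ}
    {σ : EuclideanSpace ℝ (Fin N) → EuclideanSpace ℝ (Fin N)}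
    {x : EuclideanSpace ℝ (Fin N)} (hη : DifferentiableAt ℝ η x)
    (hσ : DifferentiableAt ℝ σ x) :
    vdiv (fun y => η y • σ y) x = fderiv ℝ η x (σ x) + η x * vdiv σ x := by
  unfold vdiv
  rw [fderiv_fun_smul hη hσ]
  have hterm : ∀ i : Fin N,
      ((η x • fderiv ℝ σ x + (fderiv ℝ η x).smulRight (σ x)) (EuclideanSpace.single i 1)) i
      = η x * (fderiv ℝ σ x (EuclideanSpace.single i 1) i)
        + (fderiv ℝ η x (EuclideanSpace.single i 1)) * (σ x i) := by
    intro i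
    simp only [ContinuousLinearMap.add_apply, ContinuousLinearMap.coe_smul',
      Pi.smul_apply, ContinuousLinearMap.smulRight_apply, PiLp.add_apply,
      PiLp.smul_apply, smul_eq_mul]
  simp only [hterm]
  rw [Finset.sum_add_distrib, ← Finset.mul_sum]
  rw [fderiv_apply_eq_sum (fderiv ℝ η x) (σ x)]
  ring_nf
  congr 1
  apply Finset.sum_congr rfl
  intro i _
  ring

lemma fderiv_zero_of_nmem_tsupport {σ : EuclideanSpace ℝ (Fin N) → EuclideanSpace ℝ (Fin N)}
    {x : EuclideanSpace ℝ (Fin N)} (hx : x ∉ tsupport σ) : fderiv ℝ σ x = 0 := by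
  by_contra h
  exact hx (support_fderiv_subset ℝ (f := σ) h)

lemma vdiv_zero_of_nmem_tsupport {σ : EuclideanSpace ℝ (Fin N) → EuclideanSpace ℝ (Fin N)}
    {x : EuclideanSpace ℝ (Fin N)} (hx : x ∉ tsupport σ) : vdiv σ x = 0 := by
  unfold vdiv
  rw [fderiv_zero_of_nmem_tsupport hx]
  simp

lemma continuous_vdiv {σ : EuclideanSpace ℝ (Fin N) → EuclideanSpace ℝ (Fin N)}
    (hσ : ContDiff ℝ 1 σ) : Continuous (vdiv σ) := by
  unfold vdiv
  apply continuous_finset_sum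
  intro i _
  have h1 : Continuous (fderiv ℝ σ) := hσ.continuous_fderiv one_ne_zero
  have h2 : Continuous fun x => fderiv ℝ σ x (EuclideanSpace.single i 1) :=
    h1.clm_apply continuous_const
  exact (continuous_apply i).comp ((PiLp.continuous_ofLp 2 _).comp h2)

end AuxDiv

section AuxMoll

variable {N : ℕ}

lemma moll_contDiff (φ : ContDiffBump (0 : EuclideanSpace ℝ (Fin N)))
    {f : EuclideanSpace ℝ (Fin N) → ℝ} (hf : Continuous f) :
    ContDiff ℝ 1 (φ.normed volume ⋆[ContinuousLinearMap.lsmul ℝ ℝ, volume] f) :=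
  HasCompactSupport.contDiff_convolution_left _ φ.hasCompactSupport_normed
    φ.contDiff_normed hf.locallyIntegrable

lemma moll_dist (φ : ContDiffBump (0 : EuclideanSpace ℝ (Fin N)))
    {f : EuclideanSpace ℝ (Fin N) → ℝ} (hf : Continuous f)
    (hlip : LipschitzWith 1 f) (x : EuclideanSpace ℝ (Fin N)) :
    |(φ.normed volume ⋆[ContinuousLinearMap.lsmul ℝ ℝ, volume] f) x - f x| ≤ φ.rOut := by
  have h := dist_convolution_le (μ := volume) (f := φ.normed volume) (x₀ := x)
    (R := φ.rOut) (ε := φ.rOut) (z₀ := f x) φ.rOut_pos.le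
    (by rw [φ.support_normed_eq]) (φ.nonneg_normed) φ.integral_normed
    hf.aestronglyMeasurable ?_
  · rwa [Real.dist_eq] at h
  · intro z hz
    have h1 := hlip.dist_le_mul z x
    have h2 : dist (f z) (f x) ≤ dist z x := by simpa using h1
    exact h2.trans (mem_ball.1 hz).le

lemma moll_mono (φ : ContDiffBump (0 : EuclideanSpace ℝ (Fin N)))
    {f : EuclideanSpace ℝ (Fin N) → ℝ} (hf : Continuous f)
    {y : EuclideanSpace ℝ (Fin N)} (hmono : ∀ z, f z ≤ f (z + y))
    (x : EuclideanSpace ℝ (Fin N)) :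
    (φ.normed volume ⋆[ContinuousLinearMap.lsmul ℝ ℝ, volume] f) x
      ≤ (φ.normed volume ⋆[ContinuousLinearMap.lsmul ℝ ℝ, volume] f) (x + y) := by
  rw [convolution_def, convolution_def]
  have hint : ∀ w : EuclideanSpace ℝ (Fin N), Integrable
      (fun t => (ContinuousLinearMap.lsmul ℝ ℝ) (φ.normed volume t) (f (w - t))) volume := by
    intro w
    apply Continuous.integrable_of_hasCompactSupport
    · exact (φ.continuous_normed.smul (hf.comp (continuous_const.sub continuous_id)))
    · apply HasCompactSupport.smul_right φ.hasCompactSupport_normed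
  apply integral_mono (hint x) (hint (x + y))
  intro t
  simp only [ContinuousLinearMap.lsmul_apply, smul_eq_mul]
  apply mul_le_mul_of_nonneg_left _ (φ.nonneg_normed t)
  have h := hmono (x - t)
  have heq : x - t + y = x + y - t := by abel
  rwa [heq] at h

end AuxMoll

/-- comparison between the perimeter associated with `K = Σ ∩ B`
and the anisotropic perimeter relative to the cone (formula (4.4) of the paper). -/
theorem periK_le_anisotropic_perimeter
    {N : ℕ}
    (H : EuclideanSpace ℝ (Fin N) → ℝ) (hH : IsAnisoNorm H)
    (S : Set (EuclideanSpace ℝ (Fin N))) (hS : IsOpenConvexCone S)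
    (E : Set (EuclideanSpace ℝ (Fin N))) (hE : MeasurableSet E) (hES : E ⊆ S)
    (hEfin : periW (fun x => ‖x‖) (fun _ => (1:ℝ)) E Set.univ < ⊤) :
    periK (S ∩ {y | dualNorm H y < 1}) E ≤
      periW (dualNorm H) (fun _ => (1:ℝ)) E S := by
  rw [periK]
  refine iSup₂_le ?_
  rintro σ ⟨hσC, hσsupp, hσmem⟩
  rcases S.eq_empty_or_nonempty with rfl | hSne
  · exfalso
    have h := hσmem 0
    simp at h
  have hvalS : ∀ x, σ x ∈ closure S := fun x =>
    closure_mono inter_subset_left (hσmem x)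
  have hdual : ∀ x, dualNorm H (σ x) ≤ 1 := fun x =>
    dualNorm_le_one_of_mem_closure hH (closure_mono inter_subset_right (hσmem x))
  by_cases hSuniv : S = Set.univ
  · subst hSuniv
    rw [periW]
    exact le_iSup₂_of_le σ ⟨hσC, hσsupp, subset_univ _, fun x => hdual x⟩ le_rfl
  -- main case: S is a proper open convex cone
  have hne : Sᶜ.Nonempty := Set.nonempty_compl.2 hSuniv
  set f : EuclideanSpace ℝ (Fin N) → ℝ := fun x => infDist x Sᶜ with hfdef
  have hfc : Continuous f := continuous_infDist_pt _
  have hflip : LipschitzWith 1 f := lipschitz_infDist_pt _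
  have hfpos : ∀ x ∈ S, 0 < f x := by
    intro x hx
    exact (hS.1.isClosed_compl.notMem_iff_infDist_pos hne).1 (by simpa using hx)
  have hfS : ∀ x, 0 < f x → x ∈ S := by
    intro x hx
    by_contra hxS
    rw [hfdef] at hx
    simp only [infDist_zero_of_mem (show x ∈ Sᶜ from hxS)] at hx
    exact lt_irrefl 0 hx
  have hfmono : ∀ y ∈ closure S, ∀ x, f x ≤ f (x + y) := fun y hy x =>
    infDist_mono_cone hS hne hy x
  -- mollified cutoffs
  set δ : ℕ → ℝ := fun n => 1 / (2 * ((n : ℝ) + 1)) with hδdef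
  have hδpos : ∀ n, 0 < δ n := by
    intro n
    rw [hδdef]
    positivity
  set φ : (n : ℕ) → ContDiffBump (0 : EuclideanSpace ℝ (Fin N)) :=
    fun n => ⟨δ n / 2, δ n, by positivity, by
      have := hδpos n
      linarith⟩ with hφdef
  set g : ℕ → EuclideanSpace ℝ (Fin N) → ℝ :=
    fun n => (φ n).normed volume ⋆[ContinuousLinearMap.lsmul ℝ ℝ, volume] f with hgdef
  have hgC : ∀ n, ContDiff ℝ 1 (g n) := fun n => moll_contDiff (φ n) hfc
  have hgdist : ∀ n x, |g n x - f x| ≤ δ n := fun n x => moll_dist (φ n) hfc hflip x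
  have hgmono : ∀ n, ∀ y ∈ closure S, ∀ x, g n x ≤ g n (x + y) := fun n y hy x =>
    moll_mono (φ n) hfc (hfmono y hy) x
  set η : ℕ → EuclideanSpace ℝ (Fin N) → ℝ :=
    fun n x => Real.smoothTransition (((n : ℝ) + 1) * g n x - 1) with hηdef
  have hηC : ∀ n, ContDiff ℝ 1 (η n) := by
    intro n
    exact Real.smoothTransition.contDiff.comp ((contDiff_const.mul (hgC n)).sub contDiff_const)
  have hη0 : ∀ n x, 0 ≤ η n x := fun n x => Real.smoothTransition.nonneg _
  have hη1 : ∀ n x, η n x ≤ 1 := fun n x => Real.smoothTransition.le_one _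
  have hηmono : ∀ n x, ∀ t : ℝ, 0 < t → η n x ≤ η n (x + t • σ x) := by
    intro n x t ht
    apply smoothTransition_monotone'
    have hyc : t • σ x ∈ closure S := cone_smul_closure_mem hS (hvalS x) ht
    have := hgmono n _ hyc x
    nlinarith [this]
  have hηdiff : ∀ n x, DifferentiableAt ℝ (η n) x := fun n x =>
    ((hηC n).differentiable one_ne_zero).differentiableAt
  have hA : ∀ n x, 0 ≤ fderiv ℝ (η n) x (σ x) := fun n x =>
    fderiv_nonneg_of_monotone (hηdiff n x) (fun t ht => hηmono n x t ht)
  -- the truncated vector fields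
  set τ : ℕ → EuclideanSpace ℝ (Fin N) → EuclideanSpace ℝ (Fin N) :=
    fun n x => η n x • σ x with hτdef
  have hτC : ∀ n, ContDiff ℝ 1 (τ n) := fun n => (hηC n).smul hσC
  have hτsub : ∀ n, Function.support (τ n) ⊆ Function.support σ := by
    intro n x hx
    intro h0
    apply hx
    rw [hτdef]
    simp [h0]
  have hτsupp : ∀ n, HasCompactSupport (τ n) := fun n => hσsupp.mono (hτsub n)
  have hτtsupp : ∀ n, tsupport (τ n) ⊆ S := by
    intro n
    have hsub : Function.support (τ n) ⊆ {x | δ n ≤ f x} := by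
      intro x hx
      have hηne : η n x ≠ 0 := by
        intro h0
        apply hx
        rw [hτdef]
        simp [h0]
      have harg : 0 < ((n : ℝ) + 1) * g n x - 1 := by
        by_contra hle
        push_neg at hle
        exact hηne (Real.smoothTransition.zero_of_nonpos hle)
      have hgx : 1 / ((n : ℝ) + 1) < g n x := by
        rw [div_lt_iff₀ (by positivity : (0:ℝ) < (n : ℝ) + 1)]
        nlinarith
      have hdist : g n x - f x ≤ 1 / (2 * ((n : ℝ) + 1)) := (abs_le.1 (hgdist n x)).2
      show (1 : ℝ) / (2 * ((n : ℝ) + 1)) ≤ f x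
      have h2 : 1 / ((n : ℝ) + 1) - 1 / (2 * ((n : ℝ) + 1)) = 1 / (2 * ((n : ℝ) + 1)) := by
        have hpos : (0:ℝ) < (n : ℝ) + 1 := by positivity
        field_simp
        ring
      linarith
    have hclosed : IsClosed {x : EuclideanSpace ℝ (Fin N) | δ n ≤ f x} :=
      isClosed_le continuous_const hfc
    have htsub : tsupport (τ n) ⊆ {x | δ n ≤ f x} :=
      closure_minimal hsub hclosed
    intro x hx
    exact hfS x (lt_of_lt_of_le (hδpos n) (htsub hx))
  have hτdual : ∀ n x, dualNorm H (τ n x) ≤ 1 := fun n x =>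
    dualNorm_smul_le_one hH (hdual x) (hη0 n x) (hη1 n x)
  -- each τ n is admissible for the RHS
  have hRHS : ∀ n, ENNReal.ofReal (∫ x in E, vdiv (τ n) x)
      ≤ periW (dualNorm H) (fun _ => (1:ℝ)) E S := by
    intro n
    rw [periW]
    exact le_iSup₂_of_le (τ n)
      ⟨hτC n, hτsupp n, hτtsupp n, fun x => hτdual n x⟩ le_rfl
  -- pointwise decomposition of the divergence
  have hdiv_eq : ∀ n x, vdiv (τ n) x = fderiv ℝ (η n) x (σ x) + η n x * vdiv σ x := by
    intro n x
    exact vdiv_smul (hηdiff n x) ((hσC.differentiable one_ne_zero).differentiableAt)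
  -- integrability
  have hvdivσ_cont : Continuous (vdiv σ) := continuous_vdiv hσC
  have hvdivσ_supp : Function.support (vdiv σ) ⊆ tsupport σ := by
    intro x hx
    by_contra hmem
    exact hx (vdiv_zero_of_nmem_tsupport hmem)
  have hvdivσ_cpt : HasCompactSupport (vdiv σ) := hσsupp.mono' hvdivσ_supp
  have hvdivσ_int : IntegrableOn (vdiv σ) E volume :=
    (hvdivσ_cont.integrable_of_hasCompactSupport hvdivσ_cpt).integrableOn
  have hAcont : ∀ n, Continuous (fun x => fderiv ℝ (η n) x (σ x)) := by
    intro n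
    exact ((hηC n).continuous_fderiv one_ne_zero).clm_apply (hσC.continuous)
  have hAsupp : ∀ n, Function.support (fun x => fderiv ℝ (η n) x (σ x))
      ⊆ tsupport σ := by
    intro n x hx
    by_contra hmem
    apply hx
    have hσ0 : σ x = 0 := image_eq_zero_of_notMem_tsupport hmem
    simp [hσ0]
  have hAint : ∀ n, IntegrableOn (fun x => fderiv ℝ (η n) x (σ x)) E volume := fun n =>
    ((hAcont n).integrable_of_hasCompactSupport (hσsupp.mono' (hAsupp n))).integrableOn
  have hBcont : ∀ n, Continuous (fun x => η n x * vdiv σ x) := fun n =>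
    ((hηC n).continuous).mul hvdivσ_cont
  have hBsupp : ∀ n, Function.support (fun x => η n x * vdiv σ x) ⊆ tsupport σ := by
    intro n x hx
    by_contra hmem
    apply hx
    show η n x * vdiv σ x = 0
    rw [vdiv_zero_of_nmem_tsupport hmem]
    simp
  have hBint : ∀ n, IntegrableOn (fun x => η n x * vdiv σ x) E volume := fun n =>
    ((hBcont n).integrable_of_hasCompactSupport (hσsupp.mono' (hBsupp n))).integrableOn
  -- key inequality : ∫_E η_n · div σ ≤ ∫_E div τ_n
  have hkey : ∀ n, (∫ x in E, η n x * vdiv σ x) ≤ ∫ x in E, vdiv (τ n) x := by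
    intro n
    have heq : (∫ x in E, vdiv (τ n) x)
        = (∫ x in E, fderiv ℝ (η n) x (σ x)) + ∫ x in E, η n x * vdiv σ x := by
      rw [← integral_add (hAint n) (hBint n)]
      apply setIntegral_congr_fun hE
      intro x _
      exact hdiv_eq n x
    rw [heq]
    have hnn : 0 ≤ ∫ x in E, fderiv ℝ (η n) x (σ x) :=
      setIntegral_nonneg hE (fun x _ => hA n x)
    linarith
  -- dominated convergence
  have hDCT : Filter.Tendsto (fun n => ∫ x in E, η n x * vdiv σ x) Filter.atTop
      (𝓝 (∫ x in E, vdiv σ x)) := by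
    apply tendsto_integral_of_dominated_convergence (fun x => |vdiv σ x|)
    · intro n
      exact ((hBcont n).aestronglyMeasurable).restrict
    · exact hvdivσ_int.abs
    · intro n
      apply Filter.Eventually.of_forall
      intro x
      rw [Real.norm_eq_abs, abs_mul]
      calc |η n x| * |vdiv σ x| ≤ 1 * |vdiv σ x| := by
            apply mul_le_mul_of_nonneg_right _ (abs_nonneg _)
            rw [abs_of_nonneg (hη0 n x)]
            exact hη1 n x
        _ = |vdiv σ x| := one_mul _
    · rw [MeasureTheory.ae_restrict_iff' hE]
      apply Filter.Eventually.of_forall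
      intro x hx
      have hfx : 0 < f x := hfpos x (hES hx)
      obtain ⟨n₀, hn₀⟩ := exists_nat_ge (5 / (2 * f x))
      have hev : ∀ n ≥ n₀, η n x * vdiv σ x = vdiv σ x := by
        intro n hn
        have h1 : (5 : ℝ) / (2 * f x) ≤ (n : ℝ) := le_trans hn₀ (by exact_mod_cast hn)
        have h2 : (5 : ℝ) ≤ 2 * f x * (n : ℝ) := by
          rw [div_le_iff₀ (by positivity : (0:ℝ) < 2 * f x)] at h1
          linarith
        have hglow : g n x ≥ f x - δ n := by
          have := (abs_le.1 (hgdist n x)).1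
          linarith
        have harg : 1 ≤ ((n : ℝ) + 1) * g n x - 1 := by
          have hd : δ n = 1 / (2 * ((n : ℝ) + 1)) := rfl
          have hpos : (0:ℝ) < 2 * ((n : ℝ) + 1) := by positivity
          have h3 : ((n : ℝ) + 1) * δ n = 1 / 2 := by
            rw [hd]
            field_simp
          have h4 : ((n : ℝ) + 1) * g n x ≥ ((n : ℝ) + 1) * (f x - δ n) := by
            apply mul_le_mul_of_nonneg_left hglow (by positivity)
          have h5 : ((n : ℝ) + 1) * (f x - δ n) = ((n : ℝ) + 1) * f x - 1 / 2 := by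
            rw [mul_sub, h3]
          nlinarith
        have : η n x = 1 := Real.smoothTransition.one_of_one_le harg
        rw [this, one_mul]
      apply Filter.Tendsto.congr' _ tendsto_const_nhds
      filter_upwards [Filter.eventually_ge_atTop n₀] with n hn
      exact (hev n hn).symm
  -- conclusion
  have hofReal : Filter.Tendsto (fun n => ENNReal.ofReal (∫ x in E, η n x * vdiv σ x))
      Filter.atTop (𝓝 (ENNReal.ofReal (∫ x in E, vdiv σ x))) :=
    (ENNReal.continuous_ofReal.tendsto _).comp hDCT
  apply le_of_tendsto hofReal
  apply Filter.Eventually.of_forall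
  intro n
  exact le_trans (ENNReal.ofReal_le_ofReal (hkey n)) (hRHS n)
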